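/- There exists a function F assigning to every finite set P ⊂ ℝ with 0 ∈ P a feasible range assignment F(P) for P (with source 0) such that: (i) cost_2(F(P)) ≤ 1.97·opt_2(P) for every such P, and (ii) for every such P and every q ∈ ℝ ∖ P, the number of points p ∈ P ∪ {q} with F(P∪{q})(p) ≠ F(P)(p) is at most 3, where F(P) is extended by F(P)(q) = 0. (This expresses the existence of a 3-stable 1.97-approximation algorithm for the dynamic broadcast range-assignment problem in ℝ¹ for distance-power gradient α = 2.) -/

import Mathlib

open Finset

attribute [local instance] Classical.propDecidable

/-- A range assignment `ρ` for a finite point set `P` with source `s` is *feasible* if it is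
nonnegative on `P` and every point of `P` is reachable from `s` via a sequence of points of `P`
in which each step is within the range of its starting point. -/
def Feasible {X : Type*} [MetricSpace X] (P : Finset X) (s : X) (ρ : X → ℝ) : Prop :=
  (∀ p ∈ P, 0 ≤ ρ p) ∧
  ∀ p ∈ P, ∃ (m : ℕ) (f : ℕ → X), f 0 = s ∧ f m = p ∧ (∀ i ≤ m, f i ∈ P) ∧
    ∀ i < m, dist (f i) (f (i + 1)) ≤ ρ (f i)

/-- The cost `∑_{p ∈ P} ρ(p)^α` of a range assignment. -/
noncomputable def cost {X : Type*} (α : ℝ) (P : Finset X) (ρ : X → ℝ) : ℝ :=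
  ∑ p ∈ P, ρ p ^ α

/-- The optimal broadcast cost: the infimum of `cost α P ρ` over feasible `ρ`. -/
noncomputable def opt {X : Type*} [MetricSpace X] (α : ℝ) (P : Finset X) (s : X) : ℝ :=
  sInf {c : ℝ | ∃ ρ : X → ℝ, Feasible P s ρ ∧ cost α P ρ = c}

noncomputable section SASdef

def mir (P : Finset ℝ) : Finset ℝ := P.image (fun x => -x)

def nxt (P : Finset ℝ) (p : ℝ) : ℝ :=
  if h : (P.filter (fun x => p < x)).Nonempty then (P.filter (fun x => p < x)).min' h else p

def hv (P : Finset ℝ) (p : ℝ) : ℝ :=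
  if nxt P p - p > (49/50 : ℝ) * nxt P p then 0 else nxt P p - p

def prd (P : Finset ℝ) (t : ℝ) : ℝ :=
  if h : (P.filter (fun x => 0 ≤ x ∧ x < t)).Nonempty
  then (P.filter (fun x => 0 ≤ x ∧ x < t)).max' h else 0

def cv (P : Finset ℝ) (t : ℝ) : ℝ :=
  if (prd P t = 0 ∨ t - prd P t > (49/50 : ℝ) * t) then t else 0

def cover (P : Finset ℝ) : ℝ :=
  (insert (0:ℝ) ((P.filter (fun x => 0 < x)).image (cv P))).max' (insert_nonempty _ _)

def Falg (P : Finset ℝ) (p : ℝ) : ℝ :=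
  if p ∈ P then
    (if 0 < p then hv P p
     else if p < 0 then hv (mir P) (-p)
     else max (cover P) (cover (mir P)))
  else 0

/-! ### basic lemmas -/

lemma mem_mir {P : Finset ℝ} {x : ℝ} : x ∈ mir P ↔ -x ∈ P := by
  constructor
  · rintro hx
    obtain ⟨y, hy, rfl⟩ := Finset.mem_image.1 hx
    simpa using hy
  · intro hx
    exact Finset.mem_image.2 ⟨-x, hx, by simp⟩

lemma mir_mir (P : Finset ℝ) : mir (mir P) = P := by
  ext x; simp [mem_mir]

lemma zero_mem_mir {P : Finset ℝ} (h : (0:ℝ) ∈ P) : (0:ℝ) ∈ mir P := by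
  rw [mem_mir]; simpa using h

lemma mir_insert (q : ℝ) (P : Finset ℝ) : mir (insert q P) = insert (-q) (mir P) := by
  ext x
  simp only [mem_mir, Finset.mem_insert]
  constructor
  · rintro (h | h)
    · left; linarith [h]
    · right; exact h
  · rintro (h | h)
    · left; rw [h]; ring
    · right; exact h

/-- next point basic facts, when a successor exists -/
lemma nxt_spec {P : Finset ℝ} {p : ℝ} (h : (P.filter (fun x => p < x)).Nonempty) :
    nxt P p ∈ P ∧ p < nxt P p ∧ ∀ x ∈ P, p < x → nxt P p ≤ x := by
  rw [nxt, dif_pos h]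
  have hm := Finset.min'_mem _ h
  rw [Finset.mem_filter] at hm
  exact ⟨hm.1, hm.2, fun x hx hpx => Finset.min'_le _ _ (Finset.mem_filter.2 ⟨hx, hpx⟩)⟩

lemma nxt_eq_of_empty {P : Finset ℝ} {p : ℝ} (h : ¬(P.filter (fun x => p < x)).Nonempty) :
    nxt P p = p := by rw [nxt, dif_neg h]

lemma hv_nonneg (P : Finset ℝ) (p : ℝ) (hp : 0 < p) : 0 ≤ hv P p := by
  rw [hv]
  split_ifs with h
  · exact le_refl 0
  · by_cases hne : (P.filter (fun x => p < x)).Nonempty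
    · have := (nxt_spec hne).2.1; linarith
    · rw [nxt_eq_of_empty hne]; simp

/-- predecessor basic facts -/
lemma prd_spec {P : Finset ℝ} (h0 : (0:ℝ) ∈ P) {t : ℝ} (ht : 0 < t) :
    prd P t ∈ P ∧ 0 ≤ prd P t ∧ prd P t < t ∧ ∀ x ∈ P, 0 ≤ x → x < t → x ≤ prd P t := by
  have hne : (P.filter (fun x => 0 ≤ x ∧ x < t)).Nonempty :=
    ⟨0, Finset.mem_filter.2 ⟨h0, le_refl 0, ht⟩⟩
  rw [prd, dif_pos hne]
  have hm := Finset.max'_mem _ hne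
  rw [Finset.mem_filter] at hm
  exact ⟨hm.1, hm.2.1, hm.2.2, fun x hx h1 h2 => Finset.le_max' _ _ (Finset.mem_filter.2 ⟨hx, h1, h2⟩)⟩

lemma prd_gap {P : Finset ℝ} (h0 : (0:ℝ) ∈ P) {t : ℝ} (ht : 0 < t) :
    ∀ x ∈ P, ¬(prd P t < x ∧ x < t) := by
  rintro x hx ⟨h1, h2⟩
  have hs := prd_spec h0 ht
  have hx0 : 0 ≤ x := le_trans hs.2.1 (le_of_lt h1)
  exact absurd (hs.2.2.2 x hx hx0 h2) (not_le.2 h1)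

lemma prd_nxt {P : Finset ℝ} (h0 : (0:ℝ) ∈ P) {p : ℝ} (hp : p ∈ P) (hp0 : 0 ≤ p)
    (h : (P.filter (fun x => p < x)).Nonempty) : prd P (nxt P p) = p := by
  obtain ⟨hmem, hlt, hmin⟩ := nxt_spec h
  have ht : 0 < nxt P p := lt_of_le_of_lt hp0 hlt
  have hs := prd_spec h0 ht
  have h1 : p ≤ prd P (nxt P p) := hs.2.2.2 p hp hp0 hlt
  rcases lt_or_eq_of_le h1 with h2 | h2
  · exact absurd (hmin _ hs.1 h2) (not_le.2 hs.2.2.1)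
  · exact h2.symm

lemma nxt_prd {P : Finset ℝ} (h0 : (0:ℝ) ∈ P) {t : ℝ} (ht : t ∈ P) (ht0 : 0 < t) :
    nxt P (prd P t) = t := by
  have hs := prd_spec h0 ht0
  have hne : (P.filter (fun x => prd P t < x)).Nonempty :=
    ⟨t, Finset.mem_filter.2 ⟨ht, hs.2.2.1⟩⟩
  obtain ⟨hmem, hlt, hmin⟩ := nxt_spec hne
  have h1 : nxt P (prd P t) ≤ t := hmin t ht hs.2.2.1
  rcases lt_or_eq_of_le h1 with h2 | h2
  · exact absurd ⟨hlt, h2⟩ (prd_gap h0 ht0 _ hmem)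
  · exact h2

/-! ### cover lemmas -/

lemma le_cover {P : Finset ℝ} {t : ℝ} (ht : t ∈ P) (ht0 : 0 < t) (h : cv P t = t) :
    t ≤ cover P := by
  apply Finset.le_max'
  exact Finset.mem_insert.2 (Or.inr (Finset.mem_image.2
    ⟨t, Finset.mem_filter.2 ⟨ht, ht0⟩, h⟩))

lemma cover_nonneg (P : Finset ℝ) : 0 ≤ cover P :=
  Finset.le_max' _ _ (Finset.mem_insert_self _ _)

lemma Falg_zero_eq {P : Finset ℝ} (h0 : (0:ℝ) ∈ P) :
    Falg P 0 = max (cover P) (cover (mir P)) := by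
  rw [Falg, if_pos h0]; norm_num

lemma Falg_pos_eq {P : Finset ℝ} {p : ℝ} (hp : p ∈ P) (hp0 : 0 < p) :
    Falg P p = hv P p := by
  rw [Falg, if_pos hp, if_pos hp0]

lemma Falg_neg_eq {P : Finset ℝ} {p : ℝ} (hp : p ∈ P) (hp0 : p < 0) :
    Falg P p = hv (mir P) (-p) := by
  rw [Falg, if_pos hp, if_neg (by linarith), if_pos hp0]

/-! ### feasibility -/

lemma reach_side (P : Finset ℝ) (h0 : (0:ℝ) ∈ P) (ρ : ℝ → ℝ)
    (hcov : cover P ≤ ρ 0) (hhv : ∀ p ∈ P, 0 < p → hv P p ≤ ρ p) :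
    ∀ t ∈ P, 0 < t → ∃ (m : ℕ) (f : ℕ → ℝ), f 0 = 0 ∧ f m = t ∧ (∀ i ≤ m, f i ∈ P) ∧
      ∀ i < m, dist (f i) (f (i + 1)) ≤ ρ (f i) := by
  have key : ∀ n : ℕ, ∀ t ∈ P, 0 < t → (P.filter (fun x => 0 < x ∧ x < t)).card = n →
      ∃ (m : ℕ) (f : ℕ → ℝ), f 0 = 0 ∧ f m = t ∧ (∀ i ≤ m, f i ∈ P) ∧
        ∀ i < m, dist (f i) (f (i + 1)) ≤ ρ (f i) := by
    intro n
    induction n using Nat.strong_induction_on with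
    | _ n ih =>
      intro t ht ht0 hcard
      by_cases hcv : cv P t = t
      · -- direct jump from the source
        have h1 : t ≤ ρ 0 := le_trans (le_cover ht ht0 hcv) hcov
        refine ⟨1, fun i => (match i with | 0 => (0:ℝ) | _+1 => t), rfl, rfl, ?_, ?_⟩
        · intro i _
          match i with
          | 0 => exact h0
          | Nat.succ j => exact ht
        · intro i hi
          have hi0 : i = 0 := by omega
          subst hi0
          show dist (0:ℝ) t ≤ ρ 0
          rw [Real.dist_eq, show (0:ℝ) - t = -t by ring, abs_neg, abs_of_pos ht0]
          exact h1
      · -- hop from the predecessor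
        have hs := prd_spec h0 ht0
        have hcond : ¬(prd P t = 0 ∨ t - prd P t > (49/50 : ℝ) * t) := by
          intro hc; exact hcv (by rw [cv, if_pos hc])
        push_neg at hcond
        obtain ⟨hb0, hbg⟩ := hcond
        have hbpos : 0 < prd P t := lt_of_le_of_ne hs.2.1 (Ne.symm hb0)
        set b := prd P t with hbdef
        have hnb : nxt P b = t := nxt_prd h0 ht ht0
        have hhvb : hv P b = t - b := by
          rw [hv, hnb, if_neg (by push_neg; exact hbg)]
        -- induction on b
        have hsub : P.filter (fun x => 0 < x ∧ x < b) ⊂ P.filter (fun x => 0 < x ∧ x < t) := by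
          have hsub1 : P.filter (fun x => 0 < x ∧ x < b) ⊆ P.filter (fun x => 0 < x ∧ x < t) := by
            intro x hx
            rw [Finset.mem_filter] at hx ⊢
            exact ⟨hx.1, hx.2.1, lt_trans hx.2.2 hs.2.2.1⟩
          refine (Finset.ssubset_iff_of_subset hsub1).2
            ⟨b, Finset.mem_filter.2 ⟨hs.1, hbpos, hs.2.2.1⟩, ?_⟩
          simp only [Finset.mem_filter]
          rintro ⟨-, -, h⟩; exact absurd h (lt_irrefl b)
        have hclt : (P.filter (fun x => 0 < x ∧ x < b)).card < n := by
          rw [← hcard]; exact Finset.card_lt_card hsub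
        obtain ⟨mb, f, hf0, hfm, hfP, hfd⟩ := ih _ hclt b hs.1 hbpos rfl
        have hnle : ¬ (mb + 1 ≤ mb) := by omega
        refine ⟨mb + 1, fun i => if i ≤ mb then f i else t,
          by simp [hf0], by simp [hnle], ?_, ?_⟩
        · intro i hi
          simp only []
          split_ifs with him
          · exact hfP i him
          · exact ht
        · intro i hi
          simp only []
          split_ifs with c1 c2 <;> try omega
          · exact hfd i (by omega)
          · have hie : i = mb := by omega
            subst hie
            rw [hfm, Real.dist_eq, abs_of_nonpos (by linarith [hs.2.2.1])]
            have hr : t - b ≤ ρ b := hhvb ▸ hhv b hs.1 hbpos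
            linarith
  intro t ht ht0
  exact key _ t ht ht0 rfl

theorem Falg_feasible {P : Finset ℝ} (h0 : (0:ℝ) ∈ P) : Feasible P 0 (Falg P) := by
  constructor
  · intro p hp
    rcases lt_trichotomy p 0 with h | h | h
    · rw [Falg_neg_eq hp h]; exact hv_nonneg _ _ (by linarith)
    · subst h; rw [Falg_zero_eq h0]
      exact le_trans (cover_nonneg P) (le_max_left _ _)
    · rw [Falg_pos_eq hp h]; exact hv_nonneg _ _ h
  · intro p hp
    rcases lt_trichotomy p 0 with h | h | h
    · -- mirror
      have h0' : (0:ℝ) ∈ mir P := zero_mem_mir h0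
      have hres := reach_side (mir P) h0' (fun x => Falg P (-x)) ?_ ?_ (-p) (mem_mir.2 (by simpa using hp)) (by linarith)
      · obtain ⟨m, f, hf0, hfm, hfP, hfd⟩ := hres
        refine ⟨m, fun i => -(f i), by simp [hf0], by simp [hfm], ?_, ?_⟩
        · intro i hi
          have := hfP i hi
          rw [mem_mir] at this; simpa using this
        · intro i hi
          have h2 := hfd i hi
          simp only [] at h2 ⊢
          rw [Real.dist_eq] at h2 ⊢
          rw [show -f i - -f (i+1) = -(f i - f (i+1)) by ring, abs_neg]
          exact h2
      · simp only [neg_zero]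
        rw [Falg_zero_eq h0]
        exact le_max_right _ _
      · intro x hx hx0
        show hv (mir P) x ≤ Falg P (-x)
        rw [Falg_neg_eq (mem_mir.1 (by simpa using hx)) (by linarith), neg_neg]
    · subst h
      exact ⟨0, fun _ => 0, rfl, rfl, fun i _ => h0, fun i hi => absurd hi (Nat.not_lt_zero i)⟩
    · have hres := reach_side P h0 (Falg P) ?_ ?_ p hp h
      · exact hres
      · rw [Falg_zero_eq h0]; exact le_max_left _ _
      · intro x hx hx0; rw [Falg_pos_eq hx hx0]

/-! ### stability -/

def aa (P : Finset ℝ) (q : ℝ) : ℝ :=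
  if 0 < q then
    (if h : (P.filter (fun x => 0 < x ∧ x < q)).Nonempty
      then (P.filter (fun x => 0 < x ∧ x < q)).max' h else q)
  else
    (if h : (P.filter (fun x => q < x ∧ x < 0)).Nonempty
      then (P.filter (fun x => q < x ∧ x < 0)).min' h else q)

lemma nxt_insert_eq {P : Finset ℝ} {q p : ℝ}
    (H : q ≤ p ∨ ∃ a ∈ P, p < a ∧ a < q) :
    nxt (insert q P) p = nxt P p := by
  rcases H with H | ⟨a, haP, hpa, haq⟩
  · have : (insert q P).filter (fun x => p < x) = P.filter (fun x => p < x) := by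
      rw [Finset.filter_insert, if_neg (not_lt.2 H)]
    rw [nxt, nxt, this]
  · have hfe : (insert q P).filter (fun x => p < x) = insert q (P.filter (fun x => p < x)) := by
      rw [Finset.filter_insert, if_pos (lt_trans hpa haq)]
    have hone : (P.filter (fun x => p < x)).Nonempty := ⟨a, Finset.mem_filter.2 ⟨haP, hpa⟩⟩
    have hone' : ((insert q P).filter (fun x => p < x)).Nonempty := by
      rw [hfe]; exact Finset.insert_nonempty _ _
    rw [nxt, dif_pos hone', nxt, dif_pos hone]
    apply le_antisymm
    · apply Finset.min'_le
      rw [hfe]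
      exact Finset.mem_insert.2 (Or.inr (Finset.min'_mem _ hone))
    · apply Finset.le_min'
      intro y hy
      rw [hfe, Finset.mem_insert] at hy
      rcases hy with rfl | hy
      · calc (P.filter (fun x => p < x)).min' hone ≤ a :=
              Finset.min'_le _ _ (Finset.mem_filter.2 ⟨haP, hpa⟩)
          _ ≤ y := le_of_lt haq
      · exact Finset.min'_le _ _ hy

lemma hv_insert_eq {P : Finset ℝ} {q p : ℝ}
    (H : q ≤ p ∨ ∃ a ∈ P, p < a ∧ a < q) :
    hv (insert q P) p = hv P p := by
  rw [hv, hv, nxt_insert_eq H]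

lemma stable_subset {P : Finset ℝ} (h0 : (0:ℝ) ∈ P) {q : ℝ} (hq : q ∉ P) :
    {p ∈ insert q (P : Set ℝ) | Falg (insert q P) p ≠ Function.update (Falg P) q 0 p}
      ⊆ {0, q, aa P q} := by
  intro p hp
  obtain ⟨hpmem, hpne⟩ := hp
  by_contra hcon
  simp only [Set.mem_insert_iff, Set.mem_singleton_iff] at hcon
  push_neg at hcon
  obtain ⟨hp0, hpq, hpa⟩ := hcon
  apply hpne
  have hpP : p ∈ P := by
    rcases Set.mem_insert_iff.1 hpmem with h | h
    · exact absurd h hpq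
    · exact h
  rw [Function.update_of_ne hpq]
  have hq0 : q ≠ 0 := fun h => hq (h ▸ h0)
  rcases lt_trichotomy p 0 with hsgn | hsgn | hsgn
  · -- p negative : mirror side
    rw [Falg_neg_eq (Finset.mem_insert_of_mem hpP) hsgn, Falg_neg_eq hpP hsgn, mir_insert]
    apply hv_insert_eq
    by_cases hqp : q < p
    · -- q below p (both negative)
      have hqneg : q < 0 := lt_trans hqp hsgn
      have hfa : (P.filter (fun x => q < x ∧ x < 0)).Nonempty :=
        ⟨p, Finset.mem_filter.2 ⟨hpP, hqp, hsgn⟩⟩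
      have haav : aa P q = (P.filter (fun x => q < x ∧ x < 0)).min' hfa := by
        rw [aa, if_neg (by push_neg; linarith), dif_pos hfa]
      have hmin := Finset.min'_mem _ hfa
      rw [← haav] at hmin
      rw [Finset.mem_filter] at hmin
      have hle : aa P q ≤ p := by
        rw [haav]; exact Finset.min'_le _ _ (Finset.mem_filter.2 ⟨hpP, hqp, hsgn⟩)
      have hlt : aa P q < p := lt_of_le_of_ne hle (fun h => hpa h.symm)
      right
      exact ⟨-(aa P q), mem_mir.2 (by simpa using hmin.1), by linarith [hmin.2.1, hmin.2.2], by linarith⟩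
    · left
      push_neg at hqp
      linarith
  · exact absurd hsgn hp0
  · -- p positive
    rw [Falg_pos_eq (Finset.mem_insert_of_mem hpP) hsgn, Falg_pos_eq hpP hsgn]
    apply hv_insert_eq
    by_cases hqp : p < q
    · have hqpos : 0 < q := lt_trans hsgn hqp
      have hfa : (P.filter (fun x => 0 < x ∧ x < q)).Nonempty :=
        ⟨p, Finset.mem_filter.2 ⟨hpP, hsgn, hqp⟩⟩
      have haav : aa P q = (P.filter (fun x => 0 < x ∧ x < q)).max' hfa := by
        rw [aa, if_pos hqpos, dif_pos hfa]
      have hmax := Finset.max'_mem _ hfa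
      rw [← haav] at hmax
      rw [Finset.mem_filter] at hmax
      have hle : p ≤ aa P q := by
        rw [haav]; exact Finset.le_max' _ _ (Finset.mem_filter.2 ⟨hpP, hsgn, hqp⟩)
      have hlt : p < aa P q := lt_of_le_of_ne hle hpa
      exact Or.inr ⟨aa P q, hmax.1, hlt, hmax.2.2⟩
    · left; push_neg at hqp; exact hqp

theorem Falg_stable {P : Finset ℝ} (h0 : (0:ℝ) ∈ P) {q : ℝ} (hq : q ∉ P) :
    {p ∈ insert q (P : Set ℝ) |
      Falg (insert q P) p ≠ Function.update (Falg P) q 0 p}.ncard ≤ 3 := by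
  have hsub := stable_subset h0 hq
  calc {p ∈ insert q (P : Set ℝ) | Falg (insert q P) p ≠ Function.update (Falg P) q 0 p}.ncard
      ≤ ({0, q, aa P q} : Set ℝ).ncard :=
        Set.ncard_le_ncard hsub (((Set.finite_singleton _).insert _).insert _)
    _ ≤ 3 := by
        apply le_trans (Set.ncard_insert_le _ _)
        have : ({q, aa P q} : Set ℝ).ncard ≤ 2 := by
          apply le_trans (Set.ncard_insert_le _ _)
          simp [Set.ncard_singleton]
        omega

/-! ### ratio : utility lemmas -/

lemma sum_sq_le_sq_sum (S : Finset ℝ) (f : ℝ → ℝ) (hf : ∀ t ∈ S, 0 ≤ f t) :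
    ∑ t ∈ S, (f t)^2 ≤ (∑ t ∈ S, f t)^2 := by
  induction S using Finset.induction_on with
  | empty => simp
  | insert a s hnotmem ih =>
    rw [Finset.sum_insert hnotmem, Finset.sum_insert hnotmem]
    have h1 : ∑ t ∈ s, (f t)^2 ≤ (∑ t ∈ s, f t)^2 :=
      ih (fun t ht => hf t (Finset.mem_insert_of_mem ht))
    have h2 : 0 ≤ ∑ t ∈ s, f t := Finset.sum_nonneg (fun t ht => hf t (Finset.mem_insert_of_mem ht))
    have h3 : 0 ≤ f a := hf a (Finset.mem_insert_self _ _)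
    nlinarith

lemma telescope_gen (g : ℝ → ℝ) (hg : ∀ x y, 0 ≤ x → x ≤ y → g x ≤ g y) :
    ∀ (n : ℕ) (S : Finset ℝ) (a : ℝ → ℝ) (V U : ℝ), S.card = n → 0 ≤ V → V ≤ U →
    (∀ t ∈ S, V ≤ a t ∧ a t < t ∧ t ≤ U) →
    (∀ t ∈ S, ∀ t' ∈ S, t < t' → t ≤ a t') →
    ∑ t ∈ S, (g t - g (a t)) ≤ g U - g V := by
  intro n
  induction n with
  | zero =>
    intro S a V U hcard hV hVU h1 h2
    rw [Finset.card_eq_zero.1 hcard]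
    simp only [Finset.sum_empty]
    linarith [hg V U hV hVU]
  | succ n ih =>
    intro S a V U hcard hV hVU h1 h2
    have hne : S.Nonempty := Finset.card_pos.1 (by omega)
    set M := S.max' hne with hM
    have hMS : M ∈ S := Finset.max'_mem _ hne
    have hrest : ∑ t ∈ S.erase M, (g t - g (a t)) ≤ g (a M) - g V := by
      apply ih (S.erase M) a V (a M) (by rw [Finset.card_erase_of_mem hMS, hcard]; rfl) hV
        (h1 M hMS).1
      · intro t ht
        have htS := Finset.mem_of_mem_erase ht
        have htM : t < M := lt_of_le_of_ne (Finset.le_max' _ _ htS) (Finset.ne_of_mem_erase ht)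
        exact ⟨(h1 t htS).1, (h1 t htS).2.1, h2 t htS M hMS htM⟩
      · intro t ht t' ht' htt
        exact h2 t (Finset.mem_of_mem_erase ht) t' (Finset.mem_of_mem_erase ht') htt
    have hsum : ∑ t ∈ S, (g t - g (a t))
        = (g M - g (a M)) + ∑ t ∈ S.erase M, (g t - g (a t)) :=
      (Finset.add_sum_erase _ _ hMS).symm
    have hMU : g M ≤ g U := by
      have h1M := h1 M hMS
      exact hg M U (le_trans hV (le_trans h1M.1 (le_of_lt h1M.2.1))) h1M.2.2
    linarith

lemma telescope_lin (S : Finset ℝ) (a : ℝ → ℝ) (V U : ℝ) (hV : 0 ≤ V) (hVU : V ≤ U)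
    (h1 : ∀ t ∈ S, V ≤ a t ∧ a t < t ∧ t ≤ U)
    (h2 : ∀ t ∈ S, ∀ t' ∈ S, t < t' → t ≤ a t') :
    ∑ t ∈ S, (t - a t) ≤ U - V :=
  telescope_gen id (fun _ _ _ h => h) S.card S a V U rfl hV hVU h1 h2

lemma telescope_sq (S : Finset ℝ) (a : ℝ → ℝ) (V U : ℝ) (hV : 0 ≤ V) (hVU : V ≤ U)
    (h1 : ∀ t ∈ S, V ≤ a t ∧ a t < t ∧ t ≤ U)
    (h2 : ∀ t ∈ S, ∀ t' ∈ S, t < t' → t ≤ a t') :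
    ∑ t ∈ S, (t^2 - (a t)^2) ≤ U^2 - V^2 :=
  telescope_gen (fun x => x^2) (fun x y hx hxy => by nlinarith) S.card S a V U rfl hV hVU h1 h2

/-- crossing lemma : some point left of a gap covers its right end. -/
lemma crossing {P : Finset ℝ} {ρ : ℝ → ℝ} (hF : Feasible P 0 ρ) {t u : ℝ}
    (ht : t ∈ P) (hu0 : 0 ≤ u) (hut : u < t) (hgap : ∀ x ∈ P, ¬(u < x ∧ x < t)) :
    ∃ w ∈ P, w ≤ u ∧ t - w ≤ ρ w := by
  obtain ⟨m, f, hf0, hfm, hfP, hfd⟩ := hF.2 t ht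
  set S := (Finset.range (m+1)).filter (fun i => f i ≤ u) with hS
  have hSne : S.Nonempty := ⟨0, Finset.mem_filter.2 ⟨Finset.mem_range.2 (by omega),
      by rw [hf0]; exact hu0⟩⟩
  set i₀ := S.max' hSne with hi₀
  have hi₀S : i₀ ∈ S := Finset.max'_mem _ hSne
  rw [Finset.mem_filter, Finset.mem_range] at hi₀S
  have hi₀m : i₀ ≠ m := by
    intro h
    rw [h, hfm] at hi₀S
    linarith [hi₀S.2]
  have hi₀lt : i₀ < m := by omega
  have hnext : ¬ (f (i₀ + 1) ≤ u) := by
    intro h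
    have : i₀ + 1 ∈ S := Finset.mem_filter.2 ⟨Finset.mem_range.2 (by omega), h⟩
    have := Finset.le_max' _ _ this
    omega
  push_neg at hnext
  have hfP1 : f (i₀ + 1) ∈ P := hfP _ (by omega)
  have hge : t ≤ f (i₀ + 1) := by
    by_contra hlt
    push_neg at hlt
    exact hgap _ hfP1 ⟨hnext, hlt⟩
  refine ⟨f i₀, hfP _ (by omega), hi₀S.2, ?_⟩
  have hd := hfd i₀ hi₀lt
  rw [Real.dist_eq] at hd
  have : f (i₀ + 1) - f i₀ ≤ |f i₀ - f (i₀ + 1)| := by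
    rw [abs_sub_comm]; exact le_abs_self _
  linarith

lemma feasible_mir {P : Finset ℝ} {ρ : ℝ → ℝ} (h : Feasible P 0 ρ) :
    Feasible (mir P) 0 (fun x => ρ (-x)) := by
  constructor
  · intro p hp
    exact h.1 _ (mem_mir.1 hp)
  · intro p hp
    obtain ⟨m, f, hf0, hfm, hfP, hfd⟩ := h.2 (-p) (mem_mir.1 hp)
    refine ⟨m, fun i => -(f i), by show -(f 0) = 0; rw [hf0]; norm_num,
      by show -(f m) = p; rw [hfm]; norm_num, ?_, ?_⟩
    · intro i hi
      exact mem_mir.2 (by simpa using hfP i hi)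
    · intro i hi
      have h2 := hfd i hi
      simp only []
      rw [Real.dist_eq] at h2 ⊢
      rw [show -f i - -f (i+1) = -(f i - f (i+1)) by ring, abs_neg, neg_neg]
      exact h2

/-- gap value at `t` : the hop paid by the predecessor of `t`, zeroed when dominating -/
def kv (P : Finset ℝ) (t : ℝ) : ℝ :=
  if t - prd P t > (49/50 : ℝ) * t then 0 else t - prd P t

lemma kv_nonneg {P : Finset ℝ} (h0 : (0:ℝ) ∈ P) {t : ℝ} (ht : 0 < t) : 0 ≤ kv P t := by
  rw [kv]
  split_ifs with h
  · exact le_refl 0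
  · linarith [(prd_spec h0 ht).2.2.1]

lemma kv_le_gap {P : Finset ℝ} (h0 : (0:ℝ) ∈ P) {t : ℝ} (ht : 0 < t) :
    kv P t ≤ t - prd P t := by
  rw [kv]
  split_ifs with h
  · linarith [(prd_spec h0 ht).2.2.1]
  · exact le_refl _

lemma kv_sq_le {P : Finset ℝ} (h0 : (0:ℝ) ∈ P) {t : ℝ} (ht : 0 < t) :
    (kv P t)^2 ≤ (49/51) * (t^2 - (prd P t)^2) := by
  have hs := prd_spec h0 ht
  rw [kv]
  split_ifs with h
  · nlinarith [hs.2.1, hs.2.2.1]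
  · push_neg at h
    nlinarith [hs.2.1, hs.2.2.1]

/-! ### per-witness side bounds -/

lemma side_facts (P : Finset ℝ) (h0 : (0:ℝ) ∈ P) (ρ W : ℝ → ℝ)
    (hW : ∀ t ∈ P, 0 < t → W t ∈ P ∧ W t ≤ prd P t ∧ t - W t ≤ ρ (W t))
    (w : ℝ) (hw : 0 ≤ ρ w) :
    (∑ t ∈ P.filter (fun t => (0 < t ∧ 0 < prd P t) ∧ W t = w), (kv P t)^2 ≤ (ρ w)^2) ∧
    (∀ t' ∈ P.filter (fun t => 0 < t ∧ W t = w), (kv P t' = 0 ∨ ¬ (0 < prd P t')) →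
      ∑ t ∈ P.filter (fun t => (0 < t ∧ 0 < prd P t) ∧ W t = w), (kv P t)^2
        ≤ (49/51) * (((max (w + ρ w) (max w 0))^2 - (max w 0)^2) - (t'^2 - (prd P t')^2))) ∧
    (∑ t ∈ P.filter (fun t => (0 < t ∧ 0 < prd P t) ∧ W t = w), (kv P t)^2
       ≤ (49/51) * ((max (w + ρ w) (max w 0))^2 - (max w 0)^2)) := by
  set V := max w 0 with hV
  set U := max (w + ρ w) V with hU
  set G := P.filter (fun t => 0 < t ∧ W t = w) with hG
  set B := P.filter (fun t => (0 < t ∧ 0 < prd P t) ∧ W t = w) with hB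
  have hBG : B ⊆ G := by
    intro t ht
    rw [hB, Finset.mem_filter] at ht
    rw [hG, Finset.mem_filter]
    exact ⟨ht.1, ht.2.1.1, ht.2.2⟩
  have hV0 : 0 ≤ V := le_max_right _ _
  have hVU : V ≤ U := le_max_right _ _
  have hUV : U - V ≤ ρ w := by
    rw [hU]
    have h1 : w + ρ w ≤ V + ρ w := by
      have : w ≤ V := le_max_left _ _
      linarith
    have h2 : V ≤ V + ρ w := by linarith
    have := max_le h1 h2
    linarith
  have hGmem : ∀ t ∈ G, t ∈ P ∧ 0 < t ∧ W t = w := by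
    intro t ht
    rw [hG, Finset.mem_filter] at ht
    exact ⟨ht.1, ht.2.1, ht.2.2⟩
  have h1 : ∀ t ∈ G, V ≤ prd P t ∧ prd P t < t ∧ t ≤ U := by
    intro t ht
    obtain ⟨htP, ht0, htW⟩ := hGmem t ht
    obtain ⟨-, hWle, hWr⟩ := hW t htP ht0
    have hs := prd_spec h0 ht0
    refine ⟨max_le (htW ▸ hWle) hs.2.1, hs.2.2.1, ?_⟩
    rw [hU]
    exact le_trans (by rw [← htW]; linarith) (le_max_left _ _)
  have h2 : ∀ t ∈ G, ∀ t' ∈ G, t < t' → t ≤ prd P t' := by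
    intro t ht t' ht' htt
    obtain ⟨htP, ht0, -⟩ := hGmem t ht
    obtain ⟨ht'P, ht'0, -⟩ := hGmem t' ht'
    exact (prd_spec h0 ht'0).2.2.2 t htP (le_of_lt ht0) htt
  have htel_sq : ∑ t ∈ G, (t^2 - (prd P t)^2) ≤ U^2 - V^2 :=
    telescope_sq G (prd P) V U hV0 hVU h1 h2
  have htel_lin : ∑ t ∈ G, (t - prd P t) ≤ U - V :=
    telescope_lin G (prd P) V U hV0 hVU h1 h2
  have hkv_nonneg : ∀ t ∈ G, 0 ≤ kv P t := fun t ht => kv_nonneg h0 (hGmem t ht).2.1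
  have hgap_nonneg : ∀ t ∈ G, 0 ≤ t - prd P t := by
    intro t ht
    linarith [(h1 t ht).2.1]
  have hsq_nonneg : ∀ t ∈ G, 0 ≤ t^2 - (prd P t)^2 := by
    intro t ht
    have := (h1 t ht).1
    have := (h1 t ht).2.1
    nlinarith [hV0]
  refine ⟨?_, ?_, ?_⟩
  · -- linear bound
    have hs1 : ∑ t ∈ B, kv P t ≤ ∑ t ∈ G, kv P t :=
      Finset.sum_le_sum_of_subset_of_nonneg hBG (fun t ht _ => hkv_nonneg t ht)
    have hs2 : ∑ t ∈ G, kv P t ≤ ∑ t ∈ G, (t - prd P t) :=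
      Finset.sum_le_sum (fun t ht => kv_le_gap h0 (hGmem t ht).2.1)
    have hs3 : ∑ t ∈ B, (kv P t)^2 ≤ (∑ t ∈ B, kv P t)^2 :=
      sum_sq_le_sq_sum B _ (fun t ht => hkv_nonneg t (hBG ht))
    have hs4 : 0 ≤ ∑ t ∈ B, kv P t :=
      Finset.sum_nonneg (fun t ht => hkv_nonneg t (hBG ht))
    nlinarith
  · -- bound excluding a special element
    intro t' ht' hcond
    have hsub2 : B.erase t' ⊆ G.erase t' := Finset.erase_subset_erase _ hBG
    have hstep1 : ∑ t ∈ B, (kv P t)^2 = ∑ t ∈ B.erase t', (kv P t)^2 := by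
      by_cases htB : t' ∈ B
      · rcases hcond with hc | hc
        · exact (Finset.sum_erase _ (by rw [hc]; norm_num)).symm
        · exfalso
          rw [hB, Finset.mem_filter] at htB
          exact hc htB.2.1.2
      · rw [Finset.erase_eq_of_notMem htB]
    have hstep2 : ∑ t ∈ B.erase t', (kv P t)^2 ≤ (49/51) * ∑ t ∈ G.erase t', (t^2 - (prd P t)^2) := by
      calc ∑ t ∈ B.erase t', (kv P t)^2 ≤ ∑ t ∈ G.erase t', (kv P t)^2 :=
            Finset.sum_le_sum_of_subset_of_nonneg hsub2 (fun t ht _ => by positivity)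
        _ ≤ ∑ t ∈ G.erase t', (49/51) * (t^2 - (prd P t)^2) :=
            Finset.sum_le_sum (fun t ht => kv_sq_le h0 (hGmem t (Finset.mem_of_mem_erase ht)).2.1)
        _ = (49/51) * ∑ t ∈ G.erase t', (t^2 - (prd P t)^2) := (Finset.mul_sum _ _ _).symm
    have hstep3 : ∑ t ∈ G.erase t', (t^2 - (prd P t)^2)
        = ∑ t ∈ G, (t^2 - (prd P t)^2) - (t'^2 - (prd P t')^2) := by
      have h := Finset.add_sum_erase _ (fun t => t^2 - (prd P t)^2) ht'
      linarith
    calc ∑ t ∈ B, (kv P t)^2 = ∑ t ∈ B.erase t', (kv P t)^2 := hstep1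
      _ ≤ (49/51) * ∑ t ∈ G.erase t', (t^2 - (prd P t)^2) := hstep2
      _ = (49/51) * (∑ t ∈ G, (t^2 - (prd P t)^2) - (t'^2 - (prd P t')^2)) := by rw [hstep3]
      _ ≤ _ := by nlinarith [htel_sq]
  · -- plain telescoped bound
    calc ∑ t ∈ B, (kv P t)^2 ≤ ∑ t ∈ G, (kv P t)^2 :=
          Finset.sum_le_sum_of_subset_of_nonneg hBG (fun t ht _ => by positivity)
      _ ≤ (49/51) * ∑ t ∈ G, (t^2 - (prd P t)^2) := by
          rw [Finset.mul_sum]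
          exact Finset.sum_le_sum (fun t ht => kv_sq_le h0 (hGmem t ht).2.1)
      _ ≤ _ := by nlinarith [htel_sq]

/-! ### master arithmetic -/

lemma master_plain (ρw w RL LL : ℝ) (hρ : 0 ≤ ρw) (hRL : 0 ≤ RL) (hLL : 0 ≤ LL)
    (hR1 : RL ≤ ρw^2)
    (hR2 : RL ≤ (49/51) * ((max (w + ρw) (max w 0))^2 - (max w 0)^2))
    (hL1 : LL ≤ ρw^2)
    (hL2 : LL ≤ (49/51) * ((max (-w + ρw) (max (-w) 0))^2 - (max (-w) 0)^2)) :
    RL + LL ≤ (197/100) * ρw^2 := by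
  rcases le_total 0 w with hw | hw
  · have e1 : max (-w) 0 = 0 := max_eq_right (by linarith)
    have e2 : max (-w + ρw) (0:ℝ) ≤ ρw := max_le (by linarith) hρ
    have e3 : (0:ℝ) ≤ max (-w + ρw) (0:ℝ) := le_max_right _ _
    have : LL ≤ (49/51) * ρw^2 := by
      apply le_trans hL2
      rw [e1]
      nlinarith
    linarith
  · have e1 : max w 0 = 0 := max_eq_right hw
    have e2 : max (w + ρw) (0:ℝ) ≤ ρw := max_le (by linarith) hρ
    have e3 : (0:ℝ) ≤ max (w + ρw) (0:ℝ) := le_max_right _ _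
    have : RL ≤ (49/51) * ρw^2 := by
      apply le_trans hR2
      rw [e1]
      nlinarith
    linarith

set_option maxHeartbeats 1000000 in
lemma master_special (ρw w t b RL LL : ℝ)
    (hρ : 0 ≤ ρw) (hb : 0 ≤ b) (hbt : b < t) (hwb : w ≤ b) (htw : t ≤ w + ρw)
    (hbb : 2500 * b^2 ≤ t^2)
    (hRL : 0 ≤ RL) (hLL : 0 ≤ LL)
    (hR : RL ≤ (49/51) * (((max (w + ρw) (max w 0))^2 - (max w 0)^2) - (t^2 - b^2)))
    (hL1 : LL ≤ ρw^2)
    (hL2 : LL ≤ (49/51) * ((max (-w + ρw) (max (-w) 0))^2 - (max (-w) 0)^2)) :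
    t^2 + RL + LL ≤ (197/100) * ρw^2 := by
  have ht0 : 0 < t := lt_of_le_of_lt hb hbt
  have h50 : 50 * b ≤ t := by nlinarith
  have hw49 : 49 * w ≤ ρw := by linarith
  rcases le_total 0 w with hw | hw
  · -- w nonnegative (and small : 49 w ≤ ρw)
    have e1 : max w 0 = w := max_eq_left hw
    have e2 : max (w + ρw) (max w 0) = w + ρw := by
      rw [e1]; exact max_eq_left (by linarith)
    have e3 : max (-w) 0 = 0 := max_eq_right (by linarith)
    have e4 : max (-w + ρw) (max (-w) 0) = ρw - w := by
      rw [e3]; rw [max_eq_left (by linarith)]; ring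
    rw [e2, e1] at hR
    rw [e4, e3] at hL2
    nlinarith [mul_nonneg (by linarith : (0:ℝ) ≤ ρw - 49*w) hw,
      mul_nonneg (by linarith : (0:ℝ) ≤ ρw - 49*w) hρ,
      mul_nonneg (by linarith : (0:ℝ) ≤ w + ρw - t) (by linarith : (0:ℝ) ≤ w + ρw + t),
      mul_nonneg (by linarith : (0:ℝ) ≤ t - 50*b) (by linarith : (0:ℝ) ≤ t + 50*b)]
  · -- w nonpositive
    have e1 : max w 0 = 0 := max_eq_right hw
    have e2 : max (w + ρw) (max w 0) = w + ρw := by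
      rw [e1]; exact max_eq_left (by linarith)
    have e3 : max (-w) 0 = -w := max_eq_left (by linarith)
    have e4 : max (-w + ρw) (max (-w) 0) = -w + ρw := by
      rw [e3]; exact max_eq_left (by linarith)
    rw [e2, e1] at hR
    rw [e4, e3] at hL2
    rcases le_total (49 * (-w)) ρw with hv | hv
    · -- v := -w small : use hL2
      nlinarith [mul_nonneg (by linarith : (0:ℝ) ≤ ρw - 49*(-w)) (by linarith : (0:ℝ) ≤ -w),
        mul_nonneg (by linarith : (0:ℝ) ≤ ρw - 49*(-w)) hρ,
        mul_nonneg (by linarith : (0:ℝ) ≤ w + ρw - t) (by linarith : (0:ℝ) ≤ w + ρw + t),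
        mul_nonneg (by linarith : (0:ℝ) ≤ t - 50*b) (by linarith : (0:ℝ) ≤ t + 50*b)]
    · -- v big : use hL1
      have hA : 0 ≤ w + ρw := by linarith
      have hB : 49 * (w + ρw) ≤ 48 * ρw := by linarith
      have s3 : t^2 ≤ (w + ρw)^2 := by
        have h := mul_le_mul htw htw (le_of_lt ht0) hA
        ring_nf at h ⊢
        linarith
      have s4 : 2401 * (w + ρw)^2 ≤ 2304 * ρw^2 := by
        have h := mul_le_mul hB hB (by linarith : (0:ℝ) ≤ 49 * (w + ρw))
          (by linarith : (0:ℝ) ≤ 48 * ρw)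
        ring_nf at h ⊢
        linarith
      clear hL2 e1 e2 e3 e4
      linarith
  
/-! ### assembly lemmas -/

lemma Falg_mir (P : Finset ℝ) (x : ℝ) : Falg (mir P) x = Falg P (-x) := by
  by_cases hx : x ∈ mir P
  · have hx' : -x ∈ P := mem_mir.1 hx
    rcases lt_trichotomy x 0 with h | h | h
    · rw [Falg, if_pos hx, if_neg (by linarith), if_pos h,
        Falg_pos_eq hx' (by linarith), mir_mir]
    · subst h
      rw [Falg, if_pos hx, if_neg (lt_irrefl 0), if_neg (lt_irrefl 0), neg_zero,
        Falg_zero_eq (by simpa using hx'), mir_mir, max_comm]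
    · rw [Falg, if_pos hx, if_pos h, Falg_neg_eq hx' (by linarith), neg_neg]
  · have hx' : -x ∉ P := fun hc => hx (mem_mir.2 hc)
    rw [Falg, if_neg hx, Falg, if_neg hx']

lemma hv_of_empty {P : Finset ℝ} {p : ℝ} (h : ¬(P.filter (fun x => p < x)).Nonempty) :
    hv P p = 0 := by
  rw [hv, nxt_eq_of_empty h]
  simp

lemma sum_hv_eq_sum_kv {P : Finset ℝ} (h0 : (0:ℝ) ∈ P) :
    ∑ p ∈ P.filter (fun x => 0 < x), (hv P p)^2
      = ∑ t ∈ P.filter (fun t => 0 < t ∧ 0 < prd P t), (kv P t)^2 := by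
  have hAsub : P.filter (fun p => 0 < p ∧ (P.filter (fun x => p < x)).Nonempty)
      ⊆ P.filter (fun x => 0 < x) := by
    intro p hp
    rw [Finset.mem_filter] at hp ⊢
    exact ⟨hp.1, hp.2.1⟩
  have hzero : ∀ p ∈ P.filter (fun x => 0 < x),
      p ∉ P.filter (fun p => 0 < p ∧ (P.filter (fun x => p < x)).Nonempty) → (hv P p)^2 = 0 := by
    intro p hp hnp
    rw [Finset.mem_filter] at hp
    have : ¬ (P.filter (fun x => p < x)).Nonempty := by
      intro hne
      exact hnp (Finset.mem_filter.2 ⟨hp.1, hp.2, hne⟩)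
    rw [hv_of_empty this]
    norm_num
  rw [← Finset.sum_subset hAsub hzero]
  apply Finset.sum_nbij' (i := fun p => nxt P p) (j := fun t => prd P t)
  · intro p hp
    rw [Finset.mem_filter] at hp
    obtain ⟨hpP, hp0, hne⟩ := hp
    obtain ⟨hmem, hlt, -⟩ := nxt_spec hne
    rw [Finset.mem_filter, prd_nxt h0 hpP (le_of_lt hp0) hne]
    exact ⟨hmem, lt_trans hp0 hlt, hp0⟩
  · intro t ht
    rw [Finset.mem_filter] at ht
    obtain ⟨htP, ht0, hprd⟩ := ht
    have hs := prd_spec h0 ht0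
    rw [Finset.mem_filter]
    exact ⟨hs.1, hprd, ⟨t, Finset.mem_filter.2 ⟨htP, hs.2.2.1⟩⟩⟩
  · intro p hp
    rw [Finset.mem_filter] at hp
    exact prd_nxt h0 hp.1 (le_of_lt hp.2.1) hp.2.2
  · intro t ht
    rw [Finset.mem_filter] at ht
    exact nxt_prd h0 ht.1 ht.2.1
  · intro p hp
    rw [Finset.mem_filter] at hp
    rw [hv, kv, prd_nxt h0 hp.1 (le_of_lt hp.2.1) hp.2.2]

lemma filter_neg_eq_image {P : Finset ℝ} :
    (mir P).filter (fun x => 0 < x) = (P.filter (fun x => x < 0)).image (fun x => -x) := by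
  ext x
  simp only [Finset.mem_filter, Finset.mem_image, mem_mir]
  constructor
  · rintro ⟨h1, h2⟩
    exact ⟨-x, ⟨h1, by linarith⟩, by ring⟩
  · rintro ⟨y, ⟨hy1, hy2⟩, rfl⟩
    constructor
    · simpa using hy1
    · linarith

lemma sum_neg_side (P : Finset ℝ) (g : ℝ → ℝ) :
    ∑ p ∈ P.filter (fun x => x < 0), g (-p) = ∑ x ∈ (mir P).filter (fun x => 0 < x), g x := by
  rw [filter_neg_eq_image, Finset.sum_image]
  intro x _ y _ h
  linarith

lemma cost_decomp {P : Finset ℝ} (h0 : (0:ℝ) ∈ P) :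
    ∑ p ∈ P, (Falg P p)^2
      = (Falg P 0)^2 + ∑ t ∈ P.filter (fun t => 0 < t ∧ 0 < prd P t), (kv P t)^2
        + ∑ t ∈ (mir P).filter (fun t => 0 < t ∧ 0 < prd (mir P) t), (kv (mir P) t)^2 := by
  have hfneg : P.filter (fun x => ¬ 0 < x) = insert 0 (P.filter (fun x => x < 0)) := by
    ext y
    simp only [Finset.mem_filter, Finset.mem_insert, not_lt]
    constructor
    · rintro ⟨hyP, hy⟩
      rcases lt_or_eq_of_le hy with h | h
      · exact Or.inr ⟨hyP, h⟩
      · exact Or.inl h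
    · rintro (rfl | ⟨hyP, hy⟩)
      · exact ⟨h0, le_refl 0⟩
      · exact ⟨hyP, le_of_lt hy⟩
  have h0notin : (0:ℝ) ∉ P.filter (fun x => x < 0) := by
    simp only [Finset.mem_filter]
    rintro ⟨-, h⟩
    exact lt_irrefl 0 h
  have e1 : ∑ p ∈ P.filter (fun x => 0 < x), (Falg P p)^2
      = ∑ t ∈ P.filter (fun t => 0 < t ∧ 0 < prd P t), (kv P t)^2 := by
    rw [← sum_hv_eq_sum_kv h0]
    apply Finset.sum_congr rfl
    intro p hp
    rw [Finset.mem_filter] at hp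
    rw [Falg_pos_eq hp.1 hp.2]
  have e2 : ∑ p ∈ P.filter (fun x => x < 0), (Falg P p)^2
      = ∑ t ∈ (mir P).filter (fun t => 0 < t ∧ 0 < prd (mir P) t), (kv (mir P) t)^2 := by
    have step1 : ∑ p ∈ P.filter (fun x => x < 0), (Falg P p)^2
        = ∑ p ∈ P.filter (fun x => x < 0), (hv (mir P) (-p))^2 := by
      apply Finset.sum_congr rfl
      intro p hp
      rw [Finset.mem_filter] at hp
      rw [Falg_neg_eq hp.1 hp.2]
    rw [step1, sum_neg_side P (fun x => (hv (mir P) x)^2),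
      sum_hv_eq_sum_kv (zero_mem_mir h0)]
  calc ∑ p ∈ P, (Falg P p)^2
      = ∑ p ∈ P.filter (fun x => 0 < x), (Falg P p)^2
        + ∑ p ∈ P.filter (fun x => ¬ 0 < x), (Falg P p)^2 :=
        (Finset.sum_filter_add_sum_filter_not P _ _).symm
    _ = ∑ p ∈ P.filter (fun x => 0 < x), (Falg P p)^2
        + ((Falg P 0)^2 + ∑ p ∈ P.filter (fun x => x < 0), (Falg P p)^2) := by
        rw [hfneg, Finset.sum_insert h0notin]
    _ = _ := by rw [e1, e2]; ring

lemma cover_cases (P : Finset ℝ) :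
    cover P = 0 ∨ ∃ t ∈ P, 0 < t ∧ cv P t = t ∧ cover P = t := by
  have hm := Finset.max'_mem _ (Finset.insert_nonempty (0:ℝ)
    ((P.filter (fun x => 0 < x)).image (cv P)))
  rw [Finset.mem_insert] at hm
  rcases hm with h | h
  · exact Or.inl h
  · rw [Finset.mem_image] at h
    obtain ⟨t, htf, hcv⟩ := h
    rw [Finset.mem_filter] at htf
    have hcover : cover P = cv P t := hcv.symm
    by_cases hcond : (prd P t = 0 ∨ t - prd P t > (49/50 : ℝ) * t)
    · have hc : cv P t = t := by rw [cv, if_pos hcond]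
      exact Or.inr ⟨t, htf.1, htf.2, hc, by rw [hcover, hc]⟩
    · have hc : cv P t = 0 := by rw [cv, if_neg hcond]
      exact Or.inl (by rw [hcover, hc])

set_option maxHeartbeats 1000000 in
theorem ratio_aux {P : Finset ℝ} (h0 : (0:ℝ) ∈ P) {ρ : ℝ → ℝ} (hF : Feasible P 0 ρ)
    (hwlog : cover (mir P) ≤ cover P) :
    ∑ p ∈ P, (Falg P p)^2 ≤ (197/100) * ∑ p ∈ P, (ρ p)^2 := by
  have hρn : ∀ p ∈ P, 0 ≤ ρ p := hF.1
  -- witness choice on the positive side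
  have hWex : ∀ t : ℝ, t ∈ P → 0 < t → ∃ w, w ∈ P ∧ w ≤ prd P t ∧ t - w ≤ ρ w := by
    intro t ht ht0
    obtain ⟨w, hw1, hw2, hw3⟩ := crossing hF ht (prd_spec h0 ht0).2.1
      (prd_spec h0 ht0).2.2.1 (prd_gap h0 ht0)
    exact ⟨w, hw1, hw2, hw3⟩
  have hWex2 : ∀ t : ℝ, ∃ w, (t ∈ P ∧ 0 < t) → (w ∈ P ∧ w ≤ prd P t ∧ t - w ≤ ρ w) := by
    intro t
    by_cases h : t ∈ P ∧ 0 < t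
    · obtain ⟨w, hw⟩ := hWex t h.1 h.2
      exact ⟨w, fun _ => hw⟩
    · exact ⟨0, fun hc => absurd hc h⟩
  choose W hWpre using hWex2
  have hW : ∀ t ∈ P, 0 < t → W t ∈ P ∧ W t ≤ prd P t ∧ t - W t ≤ ρ (W t) :=
    fun t ht ht0 => hWpre t ⟨ht, ht0⟩
  -- mirrored data
  have h0' : (0:ℝ) ∈ mir P := zero_mem_mir h0
  have hF' : Feasible (mir P) 0 (fun x => ρ (-x)) := feasible_mir hF
  have hρn' : ∀ p ∈ mir P, 0 ≤ ρ (-p) := fun p hp => hρn _ (mem_mir.1 hp)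
  have hWex' : ∀ t : ℝ, t ∈ mir P → 0 < t →
      ∃ w, w ∈ mir P ∧ w ≤ prd (mir P) t ∧ t - w ≤ ρ (-w) := by
    intro t ht ht0
    obtain ⟨w, hw1, hw2, hw3⟩ := crossing hF' ht (prd_spec h0' ht0).2.1
      (prd_spec h0' ht0).2.2.1 (prd_gap h0' ht0)
    exact ⟨w, hw1, hw2, hw3⟩
  have hWex2' : ∀ t : ℝ, ∃ w, (t ∈ mir P ∧ 0 < t) →
      (w ∈ mir P ∧ w ≤ prd (mir P) t ∧ t - w ≤ ρ (-w)) := by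
    intro t
    by_cases h : t ∈ mir P ∧ 0 < t
    · obtain ⟨w, hw⟩ := hWex' t h.1 h.2
      exact ⟨w, fun _ => hw⟩
    · exact ⟨0, fun hc => absurd hc h⟩
  choose W' hWpre' using hWex2'
  have hW' : ∀ t ∈ mir P, 0 < t → W' t ∈ mir P ∧ W' t ≤ prd (mir P) t ∧
      t - W' t ≤ ρ (-(W' t)) := fun t ht ht0 => hWpre' t ⟨ht, ht0⟩
  have hW'2 : ∀ t ∈ mir P, 0 < t → W' t ∈ mir P ∧ W' t ≤ prd (mir P) t ∧
      t - W' t ≤ (fun x => ρ (-x)) (W' t) := by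
    intro t ht ht0
    exact hW' t ht ht0
  -- loads
  set RL : ℝ → ℝ := fun w =>
    ∑ t ∈ P.filter (fun t => (0 < t ∧ 0 < prd P t) ∧ W t = w), (kv P t)^2 with hRLdef
  set LL : ℝ → ℝ := fun w =>
    ∑ t ∈ (mir P).filter (fun t => (0 < t ∧ 0 < prd (mir P) t) ∧ W' t = -w),
      (kv (mir P) t)^2 with hLLdef
  have hRLnn : ∀ w, 0 ≤ RL w := fun w => Finset.sum_nonneg (fun t _ => by positivity)
  have hLLnn : ∀ w, 0 ≤ LL w := fun w => Finset.sum_nonneg (fun t _ => by positivity)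
  -- fiberwise decomposition of positive-side hop costs
  have hfibR : ∑ t ∈ P.filter (fun t => 0 < t ∧ 0 < prd P t), (kv P t)^2 = ∑ w ∈ P, RL w := by
    rw [hRLdef]
    rw [← Finset.sum_fiberwise_of_maps_to (g := W)
      (fun t ht => by
        rw [Finset.mem_filter] at ht
        exact (hW t ht.1 ht.2.1).1)
      (fun t => (kv P t)^2)]
    apply Finset.sum_congr rfl
    intro w _
    rw [Finset.filter_filter]
  have hfibL : ∑ t ∈ (mir P).filter (fun t => 0 < t ∧ 0 < prd (mir P) t), (kv (mir P) t)^2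
      = ∑ w ∈ P, LL w := by
    rw [hLLdef]
    rw [← Finset.sum_fiberwise_of_maps_to (g := W')
      (fun t ht => by
        rw [Finset.mem_filter] at ht
        exact (hW' t ht.1 ht.2.1).1)
      (fun t => (kv (mir P) t)^2)]
    have : ∀ g : ℝ → ℝ, ∑ w' ∈ mir P, g w' = ∑ w ∈ P, g (-w) := by
      intro g
      rw [mir, Finset.sum_image (fun x _ y _ h => by linarith [neg_inj.1 h])]
    rw [this]
    apply Finset.sum_congr rfl
    intro w _
    rw [Finset.filter_filter]
  -- per-witness plain bound
  have hplain : ∀ w ∈ P, RL w + LL w ≤ (197/100) * (ρ w)^2 := by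
    intro w hw
    have hsfR := side_facts P h0 ρ W hW w (hρn w hw)
    have hsfL := side_facts (mir P) h0' (fun x => ρ (-x)) W' hW'2 (-w)
      (by simpa using hρn w hw)
    have hL1 : LL w ≤ (ρ w)^2 := by
      have := hsfL.1
      simpa using this
    have hL2 : LL w ≤ (49/51) * ((max (-w + ρ w) (max (-w) 0))^2 - (max (-w) 0)^2) := by
      have := hsfL.2.2
      simpa using this
    exact master_plain (ρ w) w (RL w) (LL w) (hρn w hw) (hRLnn w) (hLLnn w)
      hsfR.1 hsfR.2.2 hL1 hL2
  -- main split on the cover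
  have hzero_eq : Falg P 0 = cover P := by
    rw [Falg_zero_eq h0, max_eq_left hwlog]
  rcases cover_cases P with hc0 | ⟨tS, htSP, htS0, hcv, hcovt⟩
  · -- no special charge
    rw [cost_decomp h0, hzero_eq, hc0, hfibR, hfibL]
    have : ∑ w ∈ P, (RL w + LL w) ≤ ∑ w ∈ P, (197/100) * (ρ w)^2 :=
      Finset.sum_le_sum (fun w hw => hplain w hw)
    rw [Finset.sum_add_distrib] at this
    rw [← Finset.mul_sum] at this
    norm_num
    linarith
  · -- special charge at the witness of tS
    set wS := W tS with hwSdef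
    obtain ⟨hwSP, hwSle, hwSr⟩ := hW tS htSP htS0
    set b := prd P tS with hbdef
    have hsb := prd_spec h0 htS0
    have hcvfacts : 0 ≤ b ∧ b < tS ∧ 2500 * b^2 ≤ tS^2 ∧ (kv P tS = 0 ∨ ¬ (0 < b)) := by
      have hcond : prd P tS = 0 ∨ tS - prd P tS > (49/50 : ℝ) * tS := by
        by_contra hc
        rw [cv, if_neg hc] at hcv
        linarith [hcv, htS0]
      rcases hcond with hc | hc
      · refine ⟨le_of_eq hc.symm, by rw [← hbdef] at hc; rw [hc]; exact htS0, ?_, Or.inr ?_⟩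
        · rw [← hbdef] at hc; rw [hc]; nlinarith
        · rw [← hbdef] at hc; rw [hc]; exact lt_irrefl 0
      · refine ⟨hsb.2.1, hsb.2.2.1, ?_, Or.inl ?_⟩
        · have h50 : 50 * b < tS := by rw [hbdef]; linarith
          nlinarith [hsb.2.1]
        · rw [kv, if_pos hc]
    -- assemble
    rw [cost_decomp h0, hzero_eq, hcovt, hfibR, hfibL]
    have hkey : ∀ w ∈ P, (if w = wS then tS^2 else 0) + (RL w + LL w)
        ≤ (197/100) * (ρ w)^2 := by
      intro w hw
      by_cases hww : w = wS
      · rw [if_pos hww]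
        have hsfR := side_facts P h0 ρ W hW w (hρn w hw)
        have hsfL := side_facts (mir P) h0' (fun x => ρ (-x)) W' hW'2 (-w)
          (by simpa using hρn w hw)
        have hL1 : LL w ≤ (ρ w)^2 := by simpa using hsfL.1
        have hL2 : LL w ≤ (49/51) * ((max (-w + ρ w) (max (-w) 0))^2 - (max (-w) 0)^2) := by
          simpa using hsfL.2.2
        have htSG : tS ∈ P.filter (fun t => 0 < t ∧ W t = w) :=
          Finset.mem_filter.2 ⟨htSP, htS0, hww.symm⟩
        have hwb : w ≤ b := by rw [hww]; exact hwSle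
        have htw : tS ≤ w + ρ w := by rw [hww]; linarith [hwSr]
        have hR : RL w ≤ (49/51) *
            (((max (w + ρ w) (max w 0))^2 - (max w 0)^2) - (tS^2 - b^2)) :=
          hsfR.2.1 tS htSG hcvfacts.2.2.2
        have hmain : tS^2 + RL w + LL w ≤ (197/100) * (ρ w)^2 :=
          master_special (ρ w) w tS b (RL w) (LL w) (hρn w hw) hcvfacts.1 hcvfacts.2.1
            hwb htw hcvfacts.2.2.1 (hRLnn w) (hLLnn w) hR hL1 hL2
        linarith
      · rw [if_neg hww]
        simpa using hplain w hw
    have hsum : ∑ w ∈ P, ((if w = wS then tS^2 else 0) + (RL w + LL w))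
        ≤ ∑ w ∈ P, (197/100) * (ρ w)^2 := Finset.sum_le_sum hkey
    rw [Finset.sum_add_distrib, Finset.sum_add_distrib, Finset.sum_ite_eq' P wS
      (fun _ => tS^2), if_pos hwSP, ← Finset.mul_sum] at hsum
    linarith

theorem Falg_ratio {P : Finset ℝ} (h0 : (0:ℝ) ∈ P) {ρ : ℝ → ℝ} (hF : Feasible P 0 ρ) :
    ∑ p ∈ P, (Falg P p)^2 ≤ (197/100) * ∑ p ∈ P, (ρ p)^2 := by
  rcases le_total (cover (mir P)) (cover P) with h | h
  · exact ratio_aux h0 hF h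
  · have e1 : ∑ p ∈ P, (Falg P p)^2 = ∑ x ∈ mir P, (Falg (mir P) x)^2 := by
      rw [mir, Finset.sum_image (fun x _ y _ hxy => by linarith [neg_inj.1 hxy])]
      apply Finset.sum_congr rfl
      intro p _
      rw [show Falg (P.image (fun x => -x)) (-p) = Falg (mir P) (-p) by rw [mir], Falg_mir,
        neg_neg]
    have e2 : ∑ p ∈ P, (ρ p)^2 = ∑ x ∈ mir P, ((fun y => ρ (-y)) x)^2 := by
      rw [mir, Finset.sum_image (fun x _ y _ hxy => by linarith [neg_inj.1 hxy])]
      apply Finset.sum_congr rfl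
      intro p _
      show ρ p ^ 2 = ρ (- - p) ^ 2
      rw [neg_neg]
    rw [e1, e2]
    apply ratio_aux (zero_mem_mir h0) (feasible_mir hF)
    rw [mir_mir]
    exact h

theorem Falg_cost_opt {P : Finset ℝ} (h0 : (0:ℝ) ∈ P) :
    cost 2 P (Falg P) ≤ 1.97 * opt 2 P 0 := by
  have hconv : ∀ ρ : ℝ → ℝ, cost 2 P ρ = ∑ p ∈ P, (ρ p)^2 := by
    intro ρ
    rw [cost]
    apply Finset.sum_congr rfl
    intro p _
    rw [show (2:ℝ) = ((2:ℕ):ℝ) by norm_num, Real.rpow_natCast]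
  have hopt : (100/197) * ∑ p ∈ P, (Falg P p)^2 ≤ opt 2 P 0 := by
    rw [opt]
    apply le_csInf
    · exact ⟨cost 2 P (Falg P), Falg P, Falg_feasible h0, rfl⟩
    · rintro c ⟨ρ, hFρ, rfl⟩
      have h2 := Falg_ratio h0 hFρ
      rw [hconv ρ]
      linarith
  rw [hconv (Falg P)]
  have he : (1.97 : ℝ) = 197/100 := by norm_num
  rw [he]
  linarith

end SASdef

/-- There is a 3-stable 1.97-approximation algorithm for the dynamic
broadcast range-assignment problem in ℝ¹ for distance-power gradient α = 2. -/
theorem three_stable_algorithm_R1 :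
    ∃ F : Finset ℝ → (ℝ → ℝ),
      (∀ P : Finset ℝ, (0:ℝ) ∈ P →
        Feasible P 0 (F P) ∧ cost 2 P (F P) ≤ 1.97 * opt 2 P 0) ∧
      (∀ P : Finset ℝ, (0:ℝ) ∈ P → ∀ q : ℝ, q ∉ P →
        {p ∈ insert q (P : Set ℝ) |
          F (insert q P) p ≠ Function.update (F P) q 0 p}.ncard ≤ 3) := by
  exact ⟨Falg, fun P h0 => ⟨Falg_feasible h0, Falg_cost_opt h0⟩,
    fun P h0 q hq => Falg_stable h0 hq⟩
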